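/- Suppose μ_X/σ_X = μ_Y/σ_Y, i.e. r_X = r_Y. Then for every function f : ℝ → ℝ of class C⁴ and every x ∈ ℝ, A₁f(x) = A₂g(x), where g(x) = (1−ρ)s_n·f′(x) + f(x); that is, the fourth-order Stein operator A₁ applied to f coincides with the third-order Stein operator A₂ applied to g. -/

import Mathlib

/-- The fourth-order Stein operator `A₁` (with `s_n = σXσY/n`, `r_X = μX/σX`, `r_Y = μY/σY`). -/
noncomputable def A1 (n : ℕ) (μX μY σX σY ρ : ℝ) (f : ℝ → ℝ) (x : ℝ) : ℝ :=
  (σX * σY / (n : ℝ)) ^ 4 * (1 - ρ ^ 2) ^ 2 * x * iteratedDeriv 4 f x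
    + (σX * σY / (n : ℝ)) ^ 3 * (1 - ρ ^ 2)
        * ((n : ℝ) * (σX * σY / (n : ℝ)) * (1 - ρ ^ 2) + 4 * ρ * x) * iteratedDeriv 3 f x
    + (σX * σY / (n : ℝ)) ^ 2
        * ((n : ℝ) * (σX * σY / (n : ℝ)) * (ρ * ((μX / σX) ^ 2 + (μY / σY) ^ 2)
              - (1 + ρ ^ 2) * (μX / σX) * (μY / σY) + 3 * ρ * (1 - ρ ^ 2))
            + (6 * ρ ^ 2 - 2) * x) * iteratedDeriv 2 f x
    + (σX * σY / (n : ℝ))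
        * ((n : ℝ) * (σX * σY / (n : ℝ)) * (2 * ρ * (μX / σX) * (μY / σY) - (μX / σX) ^ 2
              - (μY / σY) ^ 2 + 3 * ρ ^ 2 - 1) - 4 * ρ * x) * iteratedDeriv 1 f x
    + (x - μX * μY - (n : ℝ) * (σX * σY / (n : ℝ)) * ρ) * f x

/-- The third-order Stein operator `A₂` (with `s_n = σXσY/n`, `r_X = μX/σX`, `r_Y = μY/σY`). -/
noncomputable def A2 (n : ℕ) (μX μY σX σY ρ : ℝ) (f : ℝ → ℝ) (x : ℝ) : ℝ :=
  (σX * σY / (n : ℝ)) ^ 3 * (1 - ρ ^ 2) * (1 + ρ) * x * iteratedDeriv 3 f x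
    + (σX * σY / (n : ℝ)) ^ 2 * (1 + ρ)
        * ((n : ℝ) * (σX * σY / (n : ℝ)) * (1 - ρ ^ 2) + (3 * ρ - 1) * x) * iteratedDeriv 2 f x
    + (σX * σY / (n : ℝ))
        * ((n : ℝ) * (σX * σY / (n : ℝ))
              * (2 * ρ ^ 2 + ρ - 1 - (1 - ρ) * (μX / σX) * (μY / σY))
            - (3 * ρ + 1) * x) * iteratedDeriv 1 f x
    + (x - (n : ℝ) * (σX * σY / (n : ℝ)) * ρ - μX * μY) * f x

/-- In the case `μX/σX = μY/σY`, the fourth-order Stein operator `A₁` applied to a `C⁴` function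
`f` coincides with the third-order Stein operator `A₂` applied to
`g = (1 - ρ) sₙ f' + f`, where `sₙ = σXσY/n`. -/
lemma key_iter (c : ℝ) (f : ℝ → ℝ) (k : ℕ) (hk : (k : ℕ) + 1 ≤ 4) (hf : ContDiff ℝ 4 f) (x : ℝ) :
    iteratedDeriv k (fun y => c * deriv f y + f y) x
      = c * iteratedDeriv (k + 1) f x + iteratedDeriv k f x := by
  have hfk : ContDiff ℝ ((k + 1 : ℕ) : WithTop ℕ∞) f := hf.of_le (by exact_mod_cast hk)
  have hdf : ContDiff ℝ (k : ℕ) (deriv f) := by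
    have := ContDiff.iterate_deriv' k 1 (by exact_mod_cast hfk)
    simpa using this
  have hfk' : ContDiff ℝ (k : ℕ) f := hfk.of_le (by exact_mod_cast Nat.le_succ k)
  have hsplit : (fun y => c * deriv f y + f y) = (fun y => c * deriv f y) + f := rfl
  rw [← iteratedDerivWithin_univ, hsplit,
    iteratedDerivWithin_add (Set.mem_univ x) uniqueDiffOn_univ
      ((contDiff_const.mul hdf).contDiffWithinAt) hfk'.contDiffWithinAt,
    iteratedDerivWithin_const_mul (Set.mem_univ x) uniqueDiffOn_univ c hdf.contDiffWithinAt,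
    iteratedDerivWithin_univ, iteratedDerivWithin_univ, ← iteratedDeriv_succ']

theorem A1_eq_A2_of_substitution
    (μX μY σX σY ρ : ℝ) (hσX : 0 < σX) (hσY : 0 < σY)
    (hρ₁ : -1 < ρ) (hρ₂ : ρ < 1) (n : ℕ) (hn : 1 ≤ n)
    (heq : μX / σX = μY / σY)
    (s : ℝ) (hs : s = σX * σY / n)
    (f : ℝ → ℝ) (hf : ContDiff ℝ 4 f) (x : ℝ) :
    A1 n μX μY σX σY ρ f x
      = A2 n μX μY σX σY ρ (fun y => (1 - ρ) * s * deriv f y + f y) x := by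
  have hn0 : (n : ℝ) ≠ 0 := Nat.cast_ne_zero.mpr (by omega)
  have h3 := key_iter ((1 - ρ) * s) f 3 (by norm_num) hf x
  have h2 := key_iter ((1 - ρ) * s) f 2 (by norm_num) hf x
  have h1 := key_iter ((1 - ρ) * s) f 1 (by norm_num) hf x
  have h1' : iteratedDeriv 1 f x = deriv f x := by rw [iteratedDeriv_one]
  have hμX : μX = μY / σY * σX := by
    field_simp at heq
    field_simp
    linarith [heq]
  simp only [A1, A2, h3, h2, h1]
  rw [hμX, hs, h1']
  field_simp
  ring
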